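/- Let d ≥ 3 be an integer and suppose S = ∞ and there exist z̃ > max(s₀,1), constants C₀, C₁ > 0, and exponents γ₀ ∈ [0,1), γ₁ ∈ [0,1] with (2−γ₀)/(2−γ₁) < d/(d−2), such that C₀ z^{γ₀} ≤ m(z) ≤ C₁ z^{γ₁} for all z > z̃. Then there exists a constant C > 0 such that h(z) ≤ C (1 + f(z)^{2d/(d−2)}) for all z > 0. -/

import Mathlib

open MeasureTheory Set Filter Topology

set_option maxHeartbeats 1000000

lemma m_concave_aux8 (m : ℝ → ℝ)
    (hm_c2 : ContDiffOn ℝ 2 m (Ioi 0))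
    (hm_conc : ∀ z : ℝ, 0 < z → deriv (deriv m) z ≤ 0) :
    ConcaveOn ℝ (Ioi 0) m := by
  have hderiv : ContDiffOn ℝ 1 (deriv m) (Ioi 0) :=
    hm_c2.deriv_of_isOpen isOpen_Ioi (by norm_num)
  refine concaveOn_of_deriv2_nonpos (convex_Ioi 0) hm_c2.continuousOn ?_ ?_ ?_
  · rw [interior_Ioi]; exact hm_c2.differentiableOn (by norm_num)
  · rw [interior_Ioi]; exact hderiv.differentiableOn (by norm_num)
  · rw [interior_Ioi]; intro x hx
    show deriv (deriv m) x ≤ 0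
    exact hm_conc x hx

lemma m_lin_lb_aux8 (m : ℝ → ℝ)
    (hm_c2 : ContDiffOn ℝ 2 m (Ioi 0))
    (hm_pos : ∀ z : ℝ, 0 < z → 0 < m z)
    (hm_conc : ∀ z : ℝ, 0 < z → deriv (deriv m) z ≤ 0)
    {r s : ℝ} (hr : 0 < r) (hrs : r ≤ s) :
    (r / s) * m s ≤ m r := by
  have hs : 0 < s := lt_of_lt_of_le hr hrs
  rcases eq_or_lt_of_le hrs with h | hrs'
  · subst h; rw [div_self hs.ne']; simp
  have hconc := m_concave_aux8 m hm_c2 hm_conc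
  have key : ∀ ε ∈ Ioo (0:ℝ) r, ((r - ε)/(s - ε)) * m s ≤ m r := by
    intro ε hε
    obtain ⟨hε0, hεr⟩ := hε
    have hεs : ε < s := lt_trans hεr hrs'
    have hden : 0 < s - ε := by linarith
    set t : ℝ := (s - r)/(s - ε) with ht
    have ht0 : 0 ≤ t := div_nonneg (by linarith) hden.le
    have ht1 : t ≤ 1 := by rw [div_le_one hden]; linarith
    have h1t : (1 - t) = (r - ε)/(s - ε) := by
      rw [ht]; field_simp; ring
    have hcomb : t * ε + (1 - t) * s = r := by
      rw [h1t, ht, div_mul_eq_mul_div, div_mul_eq_mul_div, ← add_div,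
        div_eq_iff hden.ne']; ring
    have hcc := hconc.2 (mem_Ioi.2 hε0) (mem_Ioi.2 hs) ht0 (by linarith)
      (by rw [ht]; field_simp; ring)
    simp only [smul_eq_mul] at hcc
    rw [← h1t] at hcc
    rw [hcomb] at hcc
    have hmε : 0 < m ε := hm_pos ε hε0
    calc ((r - ε)/(s - ε)) * m s = (1 - t) * m s := by rw [h1t]
      _ ≤ t * m ε + (1 - t) * m s := by nlinarith
      _ ≤ m r := hcc
  have htend : Tendsto (fun ε : ℝ => ((r - ε)/(s - ε)) * m s) (𝓝[>] 0) (𝓝 ((r/s) * m s)) := by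
    have : Tendsto (fun ε : ℝ => ((r - ε)/(s - ε)) * m s) (𝓝 0) (𝓝 (((r-0)/(s-0)) * m s)) := by
      apply Tendsto.mul _ tendsto_const_nhds
      exact (tendsto_const_nhds.sub tendsto_id).div (tendsto_const_nhds.sub tendsto_id)
        (by simpa using hs.ne')
    simpa using this.mono_left nhdsWithin_le_nhds
  refine le_of_tendsto htend ?_
  filter_upwards [Ioo_mem_nhdsGT hr] with ε hε using key ε hε

lemma sqrt_int_aux8 (m : ℝ → ℝ) (hm_cont : ContinuousOn m (Ioi 0))
    (hm_pos : ∀ z : ℝ, 0 < z → 0 < m z)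
    (hlin : ∀ {r s : ℝ}, 0 < r → r ≤ s → (r / s) * m s ≤ m r)
    (z : ℝ) (hz : 0 < z) :
    IntegrableOn (fun r => Real.sqrt (2 / m r)) (Ioo 0 z) := by
  have hmz := hm_pos z hz
  set c : ℝ := Real.sqrt (2 * z / m z) with hc
  have hF : IntegrableOn (fun r : ℝ => c * r ^ (-(1/2) : ℝ)) (Ioo 0 z) := by
    have h1 : IntervalIntegrable (fun x : ℝ => x ^ (-(1/2) : ℝ)) volume 0 z :=
      intervalIntegral.intervalIntegrable_rpow' (by norm_num)
    have h2 : IntegrableOn (fun x : ℝ => x ^ (-(1/2) : ℝ)) (Ioc 0 z) :=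
      (intervalIntegrable_iff_integrableOn_Ioc_of_le hz.le).1 h1
    exact (h2.mono_set Ioo_subset_Ioc_self).const_mul c
  have hmeas : AEStronglyMeasurable (fun r => Real.sqrt (2 / m r))
      (volume.restrict (Ioo 0 z)) := by
    refine ContinuousOn.aestronglyMeasurable ?_ measurableSet_Ioo
    refine ContinuousOn.sqrt ?_
    refine ContinuousOn.div continuousOn_const (hm_cont.mono ?_) ?_
    · exact fun x hx => hx.1
    · exact fun x hx => (hm_pos x hx.1).ne'
  refine hF.integrable.mono hmeas ?_
  rw [ae_restrict_iff' measurableSet_Ioo]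
  filter_upwards with r hr
  obtain ⟨hr0, hrz⟩ := hr
  have hmr := hm_pos r hr0
  have hlb : (r / z) * m z ≤ m r := hlin hr0 hrz.le
  have hlb0 : 0 < (r / z) * m z := by positivity
  have step1 : 2 / m r ≤ 2 * z / m z * r⁻¹ := by
    have h0 : 2 / m r ≤ 2 / ((r / z) * m z) := by gcongr
    calc 2 / m r ≤ 2 / ((r / z) * m z) := h0
      _ = 2 * z / m z * r⁻¹ := by field_simp
  have step2 : Real.sqrt (2 / m r) ≤ c * r ^ (-(1/2) : ℝ) := by
    calc Real.sqrt (2 / m r) ≤ Real.sqrt (2 * z / m z * r⁻¹) := Real.sqrt_le_sqrt step1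
      _ = c * Real.sqrt r⁻¹ := Real.sqrt_mul (by positivity) _
      _ = c * r ^ (-(1/2) : ℝ) := by
          rw [Real.sqrt_inv, Real.rpow_neg hr0.le, ← Real.sqrt_eq_rpow]
  have h1 : ‖Real.sqrt (2 / m r)‖ = Real.sqrt (2 / m r) :=
    Real.norm_of_nonneg (Real.sqrt_nonneg _)
  rw [h1]
  exact step2.trans (le_abs_self _)

lemma hcont_ii_aux8 (m : ℝ → ℝ) (hm_cont : ContinuousOn m (Ioi 0))
    (hm_pos : ∀ z : ℝ, 0 < z → 0 < m z) (z : ℝ) :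
    ∀ a b : ℝ, 0 < a → 0 < b →
      IntervalIntegrable (fun r => (z - r) / m r) volume a b := by
  intro a b ha hb
  apply ContinuousOn.intervalIntegrable
  have hsub : uIcc a b ⊆ Ioi 0 := fun x hx =>
    lt_of_lt_of_le (lt_min ha hb) hx.1
  refine ContinuousOn.div (continuousOn_const.sub continuousOn_id)
    (hm_cont.mono hsub) (fun x hx => (hm_pos x (hsub hx)).ne')

lemma h_bounded_aux8 (m : ℝ → ℝ) (hm_cont : ContinuousOn m (Ioi 0))
    (hm_pos : ∀ z : ℝ, 0 < z → 0 < m z)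
    (hlin : ∀ {r s : ℝ}, 0 < r → r ≤ s → (r / s) * m s ≤ m r)
    {s₀ : ℝ} (hs₀ : 0 < s₀) {Z : ℝ} (hZ : s₀ ≤ Z)
    {z : ℝ} (hz0 : 0 < z) (hzZ : z ≤ Z) :
    (∫ r in s₀..z, (z - r) / m r) ≤ s₀ ^ 2 / m s₀ + Z ^ 3 / (s₀ * m Z) := by
  have hms₀ := hm_pos s₀ hs₀
  have hZ0 : 0 < Z := lt_of_lt_of_le hs₀ hZ
  have hmZ := hm_pos Z hZ0
  have hM1 : (0:ℝ) ≤ s₀ ^ 2 / m s₀ := le_of_lt (div_pos (pow_pos hs₀ 2) hms₀)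
  have hM2 : (0:ℝ) ≤ Z ^ 3 / (s₀ * m Z) :=
    le_of_lt (div_pos (pow_pos hZ0 3) (mul_pos hs₀ hmZ))
  have hcont := hcont_ii_aux8 m hm_cont hm_pos z
  rcases le_total z s₀ with hcase | hcase
  · rw [intervalIntegral.integral_symm]
    have hint := hcont z s₀ hz0 hs₀
    have hlow : ∀ r ∈ Icc z s₀, -(s₀ / m s₀) ≤ (z - r) / m r := by
      intro r hr
      have hr0 : 0 < r := lt_of_lt_of_le hz0 hr.1
      have hmr := hm_pos r hr0
      have hl : (r / s₀) * m s₀ ≤ m r := hlin hr0 hr.2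
      rw [neg_le, ← neg_div, div_le_div_iff₀ hmr hms₀]
      have e1 : s₀ * (r / s₀ * m s₀) = r * m s₀ := by
        rw [← mul_assoc, mul_comm s₀ (r / s₀), div_mul_cancel₀ _ hs₀.ne']
      have e2 : r * m s₀ ≤ s₀ * m r := by
        calc r * m s₀ = s₀ * (r / s₀ * m s₀) := e1.symm
          _ ≤ s₀ * m r := mul_le_mul_of_nonneg_left hl hs₀.le
      nlinarith [hmr.le, hr.1]
    have hmono := intervalIntegral.integral_mono_on hcase
      (intervalIntegrable_const) hint hlow
    rw [intervalIntegral.integral_const, smul_eq_mul] at hmono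
    have h3 : -(s₀ ^ 2 / m s₀) ≤ (s₀ - z) * (-(s₀ / m s₀)) := by
      rw [mul_neg, neg_le_neg_iff]
      calc (s₀ - z) * (s₀ / m s₀) ≤ s₀ * (s₀ / m s₀) :=
            mul_le_mul_of_nonneg_right (by linarith) (le_of_lt (div_pos hs₀ hms₀))
        _ = s₀ ^ 2 / m s₀ := by ring
    linarith
  · have hint := hcont s₀ z hs₀ hz0
    have hup : ∀ r ∈ Icc s₀ z, (z - r) / m r ≤ Z * Z / (s₀ * m Z) := by
      intro r hr
      have hr0 : 0 < r := lt_of_lt_of_le hs₀ hr.1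
      have hmr := hm_pos r hr0
      have hl : (r / Z) * m Z ≤ m r := hlin hr0 (hr.2.trans hzZ)
      have h1 : (z - r) / m r ≤ z / m r :=
        (div_le_div_iff_of_pos_right hmr).2 (by linarith)
      have h2 : z / m r ≤ z * Z / (r * m Z) := by
        rw [div_le_div_iff₀ hmr (mul_pos hr0 hmZ)]
        have e1 : Z * (r / Z * m Z) = r * m Z := by
          rw [← mul_assoc, mul_comm Z (r / Z), div_mul_cancel₀ _ hZ0.ne']
        have e2 : r * m Z ≤ Z * m r := by
          calc r * m Z = Z * (r / Z * m Z) := e1.symm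
            _ ≤ Z * m r := mul_le_mul_of_nonneg_left hl hZ0.le
        nlinarith [hz0.le]
      have h3 : z * Z / (r * m Z) ≤ Z * Z / (s₀ * m Z) := by
        rw [div_le_div_iff₀ (mul_pos hr0 hmZ) (mul_pos hs₀ hmZ)]
        nlinarith [mul_le_mul_of_nonneg_right (mul_le_mul hzZ hr.1 hs₀.le hZ0.le) (mul_pos hZ0 hmZ).le]
      linarith
    have hmono := intervalIntegral.integral_mono_on hcase hint
      (intervalIntegrable_const) hup
    rw [intervalIntegral.integral_const, smul_eq_mul] at hmono
    have h5 : (z - s₀) * (Z * Z / (s₀ * m Z)) ≤ Z ^ 3 / (s₀ * m Z) := by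
      calc (z - s₀) * (Z * Z / (s₀ * m Z)) ≤ Z * (Z * Z / (s₀ * m Z)) :=
            mul_le_mul_of_nonneg_right (by linarith)
              (le_of_lt (div_pos (mul_pos hZ0 hZ0) (mul_pos hs₀ hmZ)))
        _ = Z ^ 3 / (s₀ * m Z) := by ring
    linarith

lemma h_upper_aux8 (m : ℝ → ℝ) (hm_cont : ContinuousOn m (Ioi 0))
    (hm_pos : ∀ z : ℝ, 0 < z → 0 < m z)
    (hlin : ∀ {r s : ℝ}, 0 < r → r ≤ s → (r / s) * m s ≤ m r)
    {s₀ : ℝ} (hs₀ : 0 < s₀) {zt : ℝ} (hzt1 : 1 < zt) (hzts : s₀ < zt)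
    {C₀ γ₀ : ℝ} (hC₀ : 0 < C₀) (hγ₀1 : γ₀ < 1)
    (hb : ∀ r : ℝ, zt < r → C₀ * r ^ γ₀ ≤ m r)
    {z : ℝ} (hz : zt < z) :
    (∫ r in s₀..z, (z - r) / m r) ≤
      ((zt - s₀) * zt / (s₀ * m zt) + C₀⁻¹ / (1 - γ₀)) * z ^ ((2:ℝ) - γ₀) := by
  have hzt0 : (0:ℝ) < zt := lt_trans one_pos hzt1
  have hz0 : (0:ℝ) < z := lt_trans hzt0 hz
  have hz1 : (1:ℝ) < z := lt_trans hzt1 hz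
  have hmzt := hm_pos zt hzt0
  have hcont := hcont_ii_aux8 m hm_cont hm_pos z
  have hsplit : (∫ r in s₀..z, (z - r) / m r) =
      (∫ r in s₀..zt, (z - r) / m r) + ∫ r in zt..z, (z - r) / m r :=
    (intervalIntegral.integral_add_adjacent_intervals
      (hcont s₀ zt hs₀ hzt0) (hcont zt z hzt0 hz0)).symm
  have hp1 : (∫ r in s₀..zt, (z - r) / m r) ≤ (zt - s₀) * (z * zt / (s₀ * m zt)) := by
    have hup : ∀ r ∈ Icc s₀ zt, (z - r) / m r ≤ z * zt / (s₀ * m zt) := by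
      intro r hr
      have hr0 : 0 < r := lt_of_lt_of_le hs₀ hr.1
      have hmr := hm_pos r hr0
      have hl : (r / zt) * m zt ≤ m r := hlin hr0 hr.2
      have h1 : (z - r) / m r ≤ z / m r := (div_le_div_iff_of_pos_right hmr).2 (by linarith)
      have h2 : z / m r ≤ z * zt / (r * m zt) := by
        rw [div_le_div_iff₀ hmr (mul_pos hr0 hmzt)]
        have e1 : zt * (r / zt * m zt) = r * m zt := by
          rw [← mul_assoc, mul_comm zt (r / zt), div_mul_cancel₀ _ hzt0.ne']
        have e2 : r * m zt ≤ zt * m r := by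
          calc r * m zt = zt * (r / zt * m zt) := e1.symm
            _ ≤ zt * m r := mul_le_mul_of_nonneg_left hl hzt0.le
        nlinarith [hz0.le]
      have h3 : z * zt / (r * m zt) ≤ z * zt / (s₀ * m zt) := by
        rw [div_le_div_iff₀ (mul_pos hr0 hmzt) (mul_pos hs₀ hmzt)]
        nlinarith [mul_le_mul_of_nonneg_right hr.1 hmzt.le,
          mul_pos hz0 hzt0]
      linarith
    have hmono := intervalIntegral.integral_mono_on hzts.le
      (hcont s₀ zt hs₀ hzt0) intervalIntegrable_const hup
    rw [intervalIntegral.integral_const, smul_eq_mul] at hmono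
    exact hmono
  have hF2cont : ContinuousOn (fun r : ℝ => z * C₀⁻¹ * r ^ (-γ₀ : ℝ)) (Icc zt z) := by
    refine continuousOn_const.mul ?_
    refine ContinuousOn.rpow_const continuousOn_id (fun x hx => Or.inl ?_)
    exact (lt_of_lt_of_le hzt0 hx.1).ne'
  have hF2int : IntegrableOn (fun r : ℝ => z * C₀⁻¹ * r ^ (-γ₀ : ℝ)) (Ioc zt z) :=
    (hF2cont.integrableOn_Icc).mono_set Ioc_subset_Icc_self
  have hgint : IntegrableOn (fun r => (z - r) / m r) (Ioc zt z) :=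
    (intervalIntegrable_iff_integrableOn_Ioc_of_le hz.le).1 (hcont zt z hzt0 hz0)
  have hp2a : (∫ r in zt..z, (z - r) / m r) ≤ ∫ r in zt..z, z * C₀⁻¹ * r ^ (-γ₀ : ℝ) := by
    rw [intervalIntegral.integral_of_le hz.le, intervalIntegral.integral_of_le hz.le]
    refine setIntegral_mono_on hgint hF2int measurableSet_Ioc ?_
    intro r hr
    have hr0 : 0 < r := lt_trans hzt0 hr.1
    have hmr := hm_pos r hr0
    have hrp : (0:ℝ) < C₀ * r ^ γ₀ := mul_pos hC₀ (Real.rpow_pos_of_pos hr0 _)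
    have hl : C₀ * r ^ γ₀ ≤ m r := hb r hr.1
    have h1 : (z - r) / m r ≤ z / m r := (div_le_div_iff_of_pos_right hmr).2 (by linarith)
    have h2 : z / m r ≤ z / (C₀ * r ^ γ₀) :=
      div_le_div_of_nonneg_left hz0.le hrp hl
    have e : z / (C₀ * r ^ γ₀) = z * C₀⁻¹ * r ^ (-γ₀ : ℝ) := by
      rw [Real.rpow_neg hr0.le, div_eq_mul_inv, mul_inv]; ring
    linarith [e ▸ h2]
  have hp2b : (∫ r in zt..z, z * C₀⁻¹ * r ^ (-γ₀ : ℝ)) ≤ C₀⁻¹ / (1 - γ₀) * z ^ ((2:ℝ) - γ₀) := by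
    rw [intervalIntegral.integral_const_mul]
    rw [integral_rpow (Or.inl (by linarith : (-1:ℝ) < -γ₀))]
    have h1g : (0:ℝ) < 1 - γ₀ := by linarith
    have e1 : -γ₀ + 1 = 1 - γ₀ := by ring
    rw [e1]
    have hnum : z ^ (1 - γ₀) - zt ^ (1 - γ₀) ≤ z ^ (1 - γ₀) := by
      have := Real.rpow_nonneg hzt0.le (1 - γ₀); linarith
    have hdiv : (z ^ (1 - γ₀) - zt ^ (1 - γ₀)) / (1 - γ₀) ≤ z ^ (1 - γ₀) / (1 - γ₀) :=
      (div_le_div_iff_of_pos_right h1g).2 hnum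
    have ez : z ^ ((2:ℝ) - γ₀) = z * z ^ (1 - γ₀) := by
      rw [show (2:ℝ) - γ₀ = 1 + (1 - γ₀) by ring, Real.rpow_add hz0, Real.rpow_one]
    calc z * C₀⁻¹ * ((z ^ (1 - γ₀) - zt ^ (1 - γ₀)) / (1 - γ₀))
        ≤ z * C₀⁻¹ * (z ^ (1 - γ₀) / (1 - γ₀)) := by
          apply mul_le_mul_of_nonneg_left hdiv
          positivity
      _ = C₀⁻¹ / (1 - γ₀) * z ^ ((2:ℝ) - γ₀) := by rw [ez]; ring
  have hA1 : (0:ℝ) ≤ (zt - s₀) * zt / (s₀ * m zt) := by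
    apply div_nonneg (mul_nonneg (by linarith) hzt0.le) (mul_pos hs₀ hmzt).le
  have hzpow : z ≤ z ^ ((2:ℝ) - γ₀) := by
    calc z = z ^ (1:ℝ) := (Real.rpow_one z).symm
      _ ≤ z ^ ((2:ℝ) - γ₀) :=
        Real.rpow_le_rpow_of_exponent_le hz1.le (by linarith)
  have hp1' : (∫ r in s₀..zt, (z - r) / m r) ≤
      ((zt - s₀) * zt / (s₀ * m zt)) * z ^ ((2:ℝ) - γ₀) := by
    calc (∫ r in s₀..zt, (z - r) / m r) ≤ (zt - s₀) * (z * zt / (s₀ * m zt)) := hp1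
      _ = ((zt - s₀) * zt / (s₀ * m zt)) * z := by ring
      _ ≤ ((zt - s₀) * zt / (s₀ * m zt)) * z ^ ((2:ℝ) - γ₀) :=
        mul_le_mul_of_nonneg_left hzpow hA1
  rw [hsplit, add_mul]
  have hp2 := hp2a.trans hp2b
  linarith

lemma f_lower_aux8 (m : ℝ → ℝ)
    (hm_pos : ∀ z : ℝ, 0 < z → 0 < m z)
    {C₁ γ₁ : ℝ} (hC₁ : 0 < C₁) (hγ₁1 : γ₁ ≤ 1)
    {zt : ℝ} (hzt1 : 1 < zt)
    (hb : ∀ r : ℝ, zt < r → m r ≤ C₁ * r ^ γ₁)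
    {z : ℝ} (hz : zt < z)
    (hintf : IntegrableOn (fun r => Real.sqrt (2 / m r)) (Ioo 0 z)) :
    Real.sqrt (2 / C₁) * ((z ^ (1 - γ₁/2) - zt ^ (1 - γ₁/2)) / (1 - γ₁/2)) ≤
      ∫ r in Ioo (0:ℝ) z, Real.sqrt (2 / m r) := by
  have hzt0 : (0:ℝ) < zt := lt_trans one_pos hzt1
  have hz0 : (0:ℝ) < z := lt_trans hzt0 hz
  set F : ℝ → ℝ := fun r => Real.sqrt (2 / C₁) * r ^ (-(γ₁/2)) with hF
  have hFcont : ContinuousOn F (Icc zt z) := by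
    refine continuousOn_const.mul (ContinuousOn.rpow_const continuousOn_id
      (fun x hx => Or.inl (lt_of_lt_of_le hzt0 hx.1).ne'))
  have hFint : IntegrableOn F (Ioo zt z) :=
    hFcont.integrableOn_Icc.mono_set Ioo_subset_Icc_self
  have hgint : IntegrableOn (fun r => Real.sqrt (2 / m r)) (Ioo zt z) :=
    hintf.mono_set (Ioo_subset_Ioo hzt0.le le_rfl)
  have hpt : ∀ r ∈ Ioo zt z, F r ≤ Real.sqrt (2 / m r) := by
    intro r hr
    have hr0 : 0 < r := lt_trans hzt0 hr.1
    have hmr := hm_pos r hr0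
    have hrp : (0:ℝ) < r ^ γ₁ := Real.rpow_pos_of_pos hr0 _
    have hl : m r ≤ C₁ * r ^ γ₁ := hb r hr.1
    have e1 : F r = Real.sqrt (2 / (C₁ * r ^ γ₁)) := by
      rw [hF]
      have h2 : (2:ℝ) / (C₁ * r ^ γ₁) = (2 / C₁) * r ^ (-γ₁) := by
        rw [Real.rpow_neg hr0.le, div_eq_mul_inv, div_eq_mul_inv, mul_inv]; ring
      rw [h2, Real.sqrt_mul (by positivity), Real.sqrt_eq_rpow (r ^ (-γ₁)),
        ← Real.rpow_mul hr0.le, show -γ₁ * (1/2) = -(γ₁/2) by ring]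
    rw [e1]
    apply Real.sqrt_le_sqrt
    exact div_le_div_of_nonneg_left (by norm_num) hmr hl
  have step1 : ∫ r in Ioo zt z, F r ≤ ∫ r in Ioo zt z, Real.sqrt (2 / m r) :=
    setIntegral_mono_on hFint hgint measurableSet_Ioo hpt
  have step2 : (∫ r in Ioo zt z, Real.sqrt (2 / m r)) ≤
      ∫ r in Ioo (0:ℝ) z, Real.sqrt (2 / m r) := by
    apply setIntegral_mono_set hintf
    · filter_upwards with r using Real.sqrt_nonneg _
    · exact HasSubset.Subset.eventuallyLE (Ioo_subset_Ioo hzt0.le le_rfl)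
  have hcalc : (∫ r in Ioo zt z, F r) =
      Real.sqrt (2 / C₁) * ((z ^ (1 - γ₁/2) - zt ^ (1 - γ₁/2)) / (1 - γ₁/2)) := by
    rw [← integral_Ioc_eq_integral_Ioo, ← intervalIntegral.integral_of_le hz.le]
    rw [hF]
    rw [intervalIntegral.integral_const_mul]
    rw [integral_rpow (Or.inl (by linarith : (-1:ℝ) < -(γ₁/2)))]
    rw [show -(γ₁/2) + 1 = 1 - γ₁/2 by ring]
  linarith [hcalc ▸ step1, step2]

/-- Let `d ≥ 3` be an integer, `S = ∞`, `m` satisfying (M) on `(0,∞)`, and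
suppose there are `z̃ > max(s₀,1)`, `C₀, C₁ > 0`, `γ₀ ∈ [0,1)`, `γ₁ ∈ [0,1]` with
`(2−γ₀)/(2−γ₁) < d/(d−2)` such that `C₀ z^{γ₀} ≤ m(z) ≤ C₁ z^{γ₁}` for all `z > z̃`.
Then there is `C > 0` with `h(z) ≤ C (1 + f(z)^{2d/(d−2)})` for all `z > 0`, where
`f(z) := ∫₀^z √(2/m(r)) dr` and `h(z) := ∫_{s₀}^z (z−r)/m(r) dr`. -/
theorem h_upper_bound_sobolev_exponent
    (d : ℕ) (hd : 3 ≤ d)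
    (m : ℝ → ℝ)
    (hm_c2 : ContDiffOn ℝ 2 m (Ioi 0))
    (hm_pos : ∀ z : ℝ, 0 < z → 0 < m z)
    (hm_conc : ∀ z : ℝ, 0 < z → deriv (deriv m) z ≤ 0)
    (hm0 : Tendsto m (𝓝[>] (0 : ℝ)) (𝓝 0))
    (s₀ : ℝ) (hs₀ : 0 < s₀)
    (ztilde C₀ C₁ γ₀ γ₁ : ℝ) (hzt : max s₀ 1 < ztilde)
    (hC₀ : 0 < C₀) (hC₁ : 0 < C₁)
    (hγ₀ : γ₀ ∈ Ico (0 : ℝ) 1) (hγ₁ : γ₁ ∈ Icc (0 : ℝ) 1)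
    (hexp : (2 - γ₀) / (2 - γ₁) < (d : ℝ) / ((d : ℝ) - 2))
    (hbound : ∀ z : ℝ, ztilde < z → C₀ * z ^ γ₀ ≤ m z ∧ m z ≤ C₁ * z ^ γ₁) :
    ∃ C : ℝ, 0 < C ∧ ∀ z : ℝ, 0 < z →
      (∫ r in s₀..z, (z - r) / m r) ≤
        C * (1 + (∫ r in Ioo (0 : ℝ) z, Real.sqrt (2 / m r))
          ^ (2 * (d : ℝ) / ((d : ℝ) - 2))) := by
  have hm_cont : ContinuousOn m (Ioi 0) := hm_c2.continuousOn
  have hlin : ∀ {r s : ℝ}, 0 < r → r ≤ s → (r / s) * m s ≤ m r :=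
    fun {r s} hr hrs => m_lin_lb_aux8 m hm_c2 hm_pos hm_conc hr hrs
  obtain ⟨hγ₀0, hγ₀1⟩ := hγ₀
  obtain ⟨hγ₁0, hγ₁1⟩ := hγ₁
  have hzt1 : (1:ℝ) < ztilde := lt_of_le_of_lt (le_max_right s₀ 1) hzt
  have hzts : s₀ < ztilde := lt_of_le_of_lt (le_max_left s₀ 1) hzt
  have hzt0 : (0:ℝ) < ztilde := lt_trans one_pos hzt1
  have hd3 : (3:ℝ) ≤ (d:ℝ) := by exact_mod_cast hd
  have hd2 : (0:ℝ) < (d:ℝ) - 2 := by linarith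
  set p : ℝ := 2 * (d : ℝ) / ((d : ℝ) - 2) with hp
  have hp_pos : 0 < p := by positivity
  set e : ℝ := 1 - γ₁ / 2 with he
  have he_pos : 0 < e := by rw [he]; linarith
  have he_half : (1:ℝ)/2 ≤ e := by rw [he]; linarith
  -- exponent comparison: 2 - γ₀ < p * e
  have hkey : 2 - γ₀ < p * e := by
    have h2γ₁ : (0:ℝ) < 2 - γ₁ := by linarith
    have h1 : (2 - γ₀) * ((d:ℝ) - 2) < (d:ℝ) * (2 - γ₁) :=
      (div_lt_div_iff₀ h2γ₁ hd2).1 hexp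
    have h2 : p * e = (d:ℝ) * (2 - γ₁) / ((d:ℝ) - 2) := by
      rw [hp, he]; field_simp
    rw [h2, lt_div_iff₀ hd2]
    linarith
  -- threshold Z
  set Z : ℝ := max ztilde ((2:ℝ) ^ (1/e) * ztilde) with hZdef
  have hZzt : ztilde ≤ Z := le_max_left _ _
  have hZ1 : (1:ℝ) < Z := lt_of_lt_of_le hzt1 hZzt
  have hZ0 : (0:ℝ) < Z := lt_trans one_pos hZ1
  have hZs₀ : s₀ ≤ Z := (hzts.trans_le hZzt).le
  have hmzt := hm_pos ztilde hzt0
  have hms₀ := hm_pos s₀ hs₀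
  have hmZ := hm_pos Z hZ0
  -- constants
  set B : ℝ := (ztilde - s₀) * ztilde / (s₀ * m ztilde) + C₀⁻¹ / (1 - γ₀) with hB
  have hB_pos : 0 < B := by
    rw [hB]
    have h1 : (0:ℝ) ≤ (ztilde - s₀) * ztilde / (s₀ * m ztilde) :=
      div_nonneg (mul_nonneg (by linarith) hzt0.le) (mul_pos hs₀ hmzt).le
    have h2 : (0:ℝ) < C₀⁻¹ / (1 - γ₀) := div_pos (inv_pos.2 hC₀) (by linarith)
    linarith
  set c₂ : ℝ := Real.sqrt (2 / C₁) / (2 * e) with hc₂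
  have hc₂_pos : 0 < c₂ :=
    div_pos (Real.sqrt_pos.2 (by positivity)) (by linarith)
  set D : ℝ := B / c₂ ^ p with hD
  have hc₂p_pos : 0 < c₂ ^ p := Real.rpow_pos_of_pos hc₂_pos p
  have hD_pos : 0 < D := div_pos hB_pos hc₂p_pos
  set M : ℝ := s₀ ^ 2 / m s₀ + Z ^ 3 / (s₀ * m Z) with hM
  have hM_pos : 0 < M := by
    rw [hM]
    have h1 : (0:ℝ) < s₀ ^ 2 / m s₀ := div_pos (pow_pos hs₀ 2) hms₀
    have h2 : (0:ℝ) ≤ Z ^ 3 / (s₀ * m Z) :=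
      le_of_lt (div_pos (pow_pos hZ0 3) (mul_pos hs₀ hmZ))
    linarith
  refine ⟨max M D, lt_max_of_lt_left hM_pos, ?_⟩
  intro z hz0
  set f : ℝ := ∫ r in Ioo (0:ℝ) z, Real.sqrt (2 / m r) with hf
  have hf0 : 0 ≤ f :=
    setIntegral_nonneg measurableSet_Ioo (fun r _ => Real.sqrt_nonneg _)
  have hfp0 : 0 ≤ f ^ p := Real.rpow_nonneg hf0 p
  rcases le_or_gt z Z with hcase | hcase
  · -- bounded regime
    have h1 := h_bounded_aux8 m hm_cont hm_pos hlin hs₀ hZs₀ hz0 hcase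
    have h2 : M ≤ max M D := le_max_left _ _
    have h3 : (0:ℝ) < max M D := lt_max_of_lt_left hM_pos
    calc (∫ r in s₀..z, (z - r) / m r) ≤ M := h1
      _ ≤ max M D * 1 := by rw [mul_one]; exact h2
      _ ≤ max M D * (1 + f ^ p) :=
          mul_le_mul_of_nonneg_left (by linarith) h3.le
  · -- large regime
    have hz_zt : ztilde < z := lt_of_le_of_lt hZzt hcase
    have hz1 : (1:ℝ) < z := lt_trans hZ1 hcase
    have hz0' : (0:ℝ) < z := lt_trans one_pos hz1
    have hintf := sqrt_int_aux8 m hm_cont hm_pos hlin z hz0'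
    -- h upper
    have hup := h_upper_aux8 m hm_cont hm_pos hlin hs₀ hzt1 hzts hC₀ hγ₀1
      (fun r hr => (hbound r hr).1) hz_zt
    -- f lower with halving
    have hflow := f_lower_aux8 m hm_pos hC₁ hγ₁1 hzt1
      (fun r hr => (hbound r hr).2) hz_zt hintf
    have hhalf : ztilde ^ e * 2 ≤ z ^ e := by
      have hge : (2:ℝ) ^ (1/e) * ztilde ≤ z := (le_max_right _ _).trans hcase.le
      have h1 : ((2:ℝ) ^ (1/e) * ztilde) ^ e ≤ z ^ e :=
        Real.rpow_le_rpow (by positivity) hge he_pos.le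
      have h2 : ((2:ℝ) ^ (1/e) * ztilde) ^ e = 2 * ztilde ^ e := by
        rw [Real.mul_rpow (by positivity) hzt0.le]
        rw [← Real.rpow_mul (by norm_num : (0:ℝ) ≤ 2)]
        rw [one_div_mul_cancel he_pos.ne', Real.rpow_one]
      linarith [h2 ▸ h1]
    have hfge : c₂ * z ^ e ≤ f := by
      have h1 : Real.sqrt (2 / C₁) * ((z ^ e - ztilde ^ e) / e) ≤ f := hflow
      have hdivi : z ^ e / (2 * e) ≤ (z ^ e - ztilde ^ e) / e := by
        rw [div_le_div_iff₀ (by linarith) he_pos]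
        linarith [mul_le_mul_of_nonneg_right hhalf he_pos.le]
      have h2 : c₂ * z ^ e ≤ Real.sqrt (2 / C₁) * ((z ^ e - ztilde ^ e) / e) := by
        calc c₂ * z ^ e = Real.sqrt (2 / C₁) * (z ^ e / (2 * e)) := by rw [hc₂]; ring
          _ ≤ _ := mul_le_mul_of_nonneg_left hdivi (Real.sqrt_nonneg _)
      linarith
    -- power chain
    have hz2γ₀ : z ^ ((2:ℝ) - γ₀) ≤ z ^ (p * e) :=
      Real.rpow_le_rpow_of_exponent_le hz1.le hkey.le
    have hfp_ge : c₂ ^ p * z ^ (e * p) ≤ f ^ p := by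
      have h1 : (c₂ * z ^ e) ^ p ≤ f ^ p :=
        Real.rpow_le_rpow (by positivity) hfge hp_pos.le
      have h2 : (c₂ * z ^ e) ^ p = c₂ ^ p * z ^ (e * p) := by
        rw [Real.mul_rpow hc₂_pos.le (Real.rpow_nonneg hz0'.le e),
          ← Real.rpow_mul hz0'.le]
      linarith [h2 ▸ h1]
    have hfinal : B * z ^ ((2:ℝ) - γ₀) ≤ D * f ^ p := by
      have h1 : B * z ^ ((2:ℝ) - γ₀) ≤ B * z ^ (p * e) :=
        mul_le_mul_of_nonneg_left hz2γ₀ hB_pos.le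
      have h2 : B * z ^ (p * e) = D * (c₂ ^ p * z ^ (e * p)) := by
        rw [hD, mul_comm p e]
        field_simp
      have h3 : D * (c₂ ^ p * z ^ (e * p)) ≤ D * f ^ p :=
        mul_le_mul_of_nonneg_left hfp_ge hD_pos.le
      linarith [h2 ▸ h1]
    have hDC : D ≤ max M D := le_max_right _ _
    have hC_pos : (0:ℝ) < max M D := lt_max_of_lt_left hM_pos
    calc (∫ r in s₀..z, (z - r) / m r) ≤ B * z ^ ((2:ℝ) - γ₀) := hup
      _ ≤ D * f ^ p := hfinal
      _ ≤ max M D * f ^ p := mul_le_mul_of_nonneg_right hDC hfp0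
      _ ≤ max M D * (1 + f ^ p) :=
          mul_le_mul_of_nonneg_left (by linarith) hC_pos.le
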